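/- Let s_A, s_B ∈ S^2, R₁, R₁^d ∈ SO(3), b_j = R₁ᵀ s_j, b_j^d = (R₁^d)ᵀ s_j for j ∈ {A,B}, and for positive constants k_{b_A}, k_{b_B} define e_b = k_{b_A}(b_A × b_A^d) + k_{b_B}(b_B × b_B^d). Then e_b = ((R₁^d)ᵀ K₁ R₁ − R₁ᵀ K₁ R₁^d)^∨, where K₁ = k_{b_A} s_A s_Aᵀ + k_{b_B} s_B s_Bᵀ. -/

import Mathlib

open Matrix

noncomputable def hat (x : Fin 3 → ℝ) : Matrix (Fin 3) (Fin 3) ℝ :=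
  !![0, -x 2, x 1; x 2, 0, -x 0; -x 1, x 0, 0]

noncomputable def vee (A : Matrix (Fin 3) (Fin 3) ℝ) : Fin 3 → ℝ := ![A 2 1, A 0 2, A 1 0]

def IsSO3 (R : Matrix (Fin 3) (Fin 3) ℝ) : Prop := Rᵀ * R = 1 ∧ R.det = 1

noncomputable def enorm3 (x : Fin 3 → ℝ) : ℝ := Real.sqrt (∑ i, x i ^ 2)

theorem error_vector_vee_form (sA sB : Fin 3 → ℝ)
    (hsA : ∑ i, sA i ^ 2 = 1) (hsB : ∑ i, sB i ^ 2 = 1)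
    (R₁ R₁d : Matrix (Fin 3) (Fin 3) ℝ) (hR₁ : IsSO3 R₁) (hR₁d : IsSO3 R₁d)
    (kA kB : ℝ) (hkA : 0 < kA) (hkB : 0 < kB) :
    kA • ((R₁ᵀ.mulVec sA) ⨯₃ (R₁dᵀ.mulVec sA)) + kB • ((R₁ᵀ.mulVec sB) ⨯₃ (R₁dᵀ.mulVec sB)) =
      vee (R₁dᵀ * (kA • vecMulVec sA sA + kB • vecMulVec sB sB) * R₁ -
        R₁ᵀ * (kA • vecMulVec sA sA + kB • vecMulVec sB sB) * R₁d) := by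
  funext i
  fin_cases i <;>
  · simp [vee, crossProduct, mulVec, dotProduct, vecMulVec, Matrix.mul_apply, Matrix.sub_apply,
      Matrix.add_apply, Matrix.smul_apply, transpose_apply, Fin.sum_univ_three]
    ring
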